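/- Let A be a unital C*-algebra over ℂ. For a surjective unital star-algebra homomorphism π : A → Matrix (Fin k) ℂ with k ≥ 1, define τ_π : A → ℂ by τ_π(a) = trace(π(a))/k; then τ_π is a tracial state on A, i.e. τ_π(1) = 1, τ_π(a* a) is real and ≥ 0 for all a, and τ_π(ab) = τ_π(ba) for all a, b. Moreover, if π : A → Matrix (Fin k) ℂ and π' : A → Matrix (Fin k') ℂ are two surjective unital star-algebra homomorphisms with ker π ≠ ker π', then τ_π ≠ τ_{π'}. Consequently, if A admits an infinite family of surjective unital star-algebra homomorphisms onto full matrix algebras with pairwise distinct kernels, then A has infinitely many pairwise distinct tracial states. -/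

import Mathlib

open Matrix

lemma trace_star_mul (n : Type*) [Fintype n] (M : Matrix n n ℂ) :
    Matrix.trace (Mᴴ * M) = ((∑ i, ∑ j, Complex.normSq (M j i) : ℝ) : ℂ) := by
  simp [Matrix.trace, Matrix.mul_apply, Matrix.diag, Matrix.conjTranspose_apply,
    Complex.normSq_eq_conj_mul_self]

lemma trace_star_mul_ne (n : Type*) [Fintype n] (M : Matrix n n ℂ) (h : M ≠ 0) :
    Matrix.trace (Mᴴ * M) ≠ 0 := by
  rw [trace_star_mul]
  norm_cast
  intro h0
  apply h
  ext i j
  have := (Finset.sum_eq_zero_iff_of_nonneg (fun i _ => Finset.sum_nonneg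
    (fun j _ => Complex.normSq_nonneg (M j i)))).mp h0
  have := (Finset.sum_eq_zero_iff_of_nonneg
    (fun r _ => Complex.normSq_nonneg (M r j))).mp (this j (Finset.mem_univ j)) i (Finset.mem_univ i)
  simpa using Complex.normSq_eq_zero.mp this

lemma pi_star_mul {A : Type*} [CStarAlgebra A] {k : ℕ}
    (π : A →⋆ₐ[ℂ] Matrix (Fin k) (Fin k) ℂ) (a : A) :
    π (star a * a) = (π a)ᴴ * (π a) := by
  rw [_root_.map_mul, map_star, Matrix.star_eq_conjTranspose]

lemma tau_ker_subset {A : Type*} [CStarAlgebra A] {k k' : ℕ} (hk' : (k' : ℂ) ≠ 0)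
    (π : A →⋆ₐ[ℂ] Matrix (Fin k) (Fin k) ℂ) (π' : A →⋆ₐ[ℂ] Matrix (Fin k') (Fin k') ℂ)
    (h : (fun a : A => Matrix.trace (π a) / (k : ℂ)) =
      (fun a : A => Matrix.trace (π' a) / (k' : ℂ))) :
    {a : A | π a = 0} ⊆ {a : A | π' a = 0} := by
  intro a ha
  simp only [Set.mem_setOf_eq] at ha ⊢
  have h1 := congrFun h (star a * a)
  rw [pi_star_mul, pi_star_mul, ha] at h1
  simp only [conjTranspose_zero, Matrix.zero_mul, Matrix.trace_zero, zero_div] at h1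
  by_contra hne
  exact trace_star_mul_ne _ _ hne (by field_simp at h1; exact h1.symm.trans (zero_mul _))

theorem stmt_18 (A : Type*) [CStarAlgebra A] :
    -- (i) τ_π is a tracial state
    (∀ (k : ℕ), 1 ≤ k → ∀ π : A →⋆ₐ[ℂ] Matrix (Fin k) (Fin k) ℂ, Function.Surjective π →
      (Matrix.trace (π 1) / (k : ℂ) = 1) ∧
      (∀ a : A, 0 ≤ (Matrix.trace (π (star a * a)) / (k : ℂ)).re ∧
        (Matrix.trace (π (star a * a)) / (k : ℂ)).im = 0) ∧
      (∀ a b : A, Matrix.trace (π (a * b)) / (k : ℂ) = Matrix.trace (π (b * a)) / (k : ℂ))) ∧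
    -- (ii) distinct kernels give distinct tracial states
    (∀ (k k' : ℕ), 1 ≤ k → 1 ≤ k' →
      ∀ (π : A →⋆ₐ[ℂ] Matrix (Fin k) (Fin k) ℂ)
        (π' : A →⋆ₐ[ℂ] Matrix (Fin k') (Fin k') ℂ),
      Function.Surjective π → Function.Surjective π' →
      {a : A | π a = 0} ≠ {a : A | π' a = 0} →
      (fun a : A => Matrix.trace (π a) / (k : ℂ)) ≠
        (fun a : A => Matrix.trace (π' a) / (k' : ℂ))) ∧
    -- (iii) infinitely many pairwise distinct kernels give infinitely many tracial states
    (∀ (ι : Type) (_ : Infinite ι) (ks : ι → ℕ)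
      (πs : ∀ i : ι, A →⋆ₐ[ℂ] Matrix (Fin (ks i)) (Fin (ks i)) ℂ),
      (∀ i, 1 ≤ ks i) → (∀ i, Function.Surjective (πs i)) →
      (∀ i j : ι, i ≠ j → {a : A | πs i a = 0} ≠ {a : A | πs j a = 0}) →
      (Set.range (fun i : ι => (fun a : A => Matrix.trace (πs i a) / (ks i : ℂ)))).Infinite) := by
  have hkc : ∀ k : ℕ, 1 ≤ k → (k : ℂ) ≠ 0 := by
    intro k hk
    exact Nat.cast_ne_zero.mpr (by omega)
  have part2 : ∀ (k k' : ℕ), 1 ≤ k → 1 ≤ k' →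
      ∀ (π : A →⋆ₐ[ℂ] Matrix (Fin k) (Fin k) ℂ)
        (π' : A →⋆ₐ[ℂ] Matrix (Fin k') (Fin k') ℂ),
      Function.Surjective π → Function.Surjective π' →
      {a : A | π a = 0} ≠ {a : A | π' a = 0} →
      (fun a : A => Matrix.trace (π a) / (k : ℂ)) ≠
        (fun a : A => Matrix.trace (π' a) / (k' : ℂ)) := by
    intro k k' hk hk' π π' _ _ hker heq
    exact hker (le_antisymm (tau_ker_subset (hkc k' hk') π π' heq)
      (tau_ker_subset (hkc k hk) π' π heq.symm))
  refine ⟨?_, part2, ?_⟩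
  · intro k hk π _
    refine ⟨?_, ?_, ?_⟩
    · rw [_root_.map_one, Matrix.trace_one]
      simp only [Fintype.card_fin]
      exact div_self (hkc k hk)
    · intro a
      rw [pi_star_mul, trace_star_mul]
      rw [show ((∑ i, ∑ j, Complex.normSq (π a j i) : ℝ) : ℂ) / (k : ℂ)
          = (((∑ i, ∑ j, Complex.normSq (π a j i)) / (k : ℝ) : ℝ) : ℂ) by push_cast; ring]
      constructor
      · rw [Complex.ofReal_re]
        apply div_nonneg _ (Nat.cast_nonneg k)
        exact Finset.sum_nonneg fun i _ => Finset.sum_nonneg fun j _ => Complex.normSq_nonneg _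
      · rw [Complex.ofReal_im]
    · intro a b
      rw [_root_.map_mul, _root_.map_mul, Matrix.trace_mul_comm]
  · intro ι hinf ks πs hks hsurj hkers
    apply Set.infinite_range_of_injective
    intro i j hij
    by_contra hne
    exact part2 _ _ (hks i) (hks j) (πs i) (πs j) (hsurj i) (hsurj j) (hkers i j hne) hij
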